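/- For all integers λ1, λ2, β1, β2 with λ1 ≥ 0, λ2 ≥ 0, −λ2 + β2 ≥ 0, β1 − 2β2 ≥ 0 and λ1 − β1 ≥ 0, one has N(λ1, λ2, β1, β2) = 1 + (1/2)λ2 + β2 + λ2β2 − (1/2)λ2². -/

import Mathlib

/-- The number of quadruples `(a22, a11, a12, a13)` of nonnegative integers satisfying
Littelmann's inequalities for `so₅(ℂ)` together with the weight equations
`a22 + a12 = β1` and `a11 + a13 = β2`.  By Littelmann's results this is the dimension of
the weight space of weight `λ1·ω1 + λ2·ω2 − β1·α1 − β2·α2` in the irreducible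
`so₅(ℂ)`-module of highest weight `λ1·ω1 + λ2·ω2`. -/
noncomputable def weightMult (l1 l2 b1 b2 : ℤ) : ℕ :=
  Set.ncard {a : ℤ × ℤ × ℤ × ℤ |
    0 ≤ a.1 ∧ 0 ≤ a.2.1 ∧ 0 ≤ a.2.2.1 ∧ 0 ≤ a.2.2.2 ∧
    2 * a.2.1 ≥ a.2.2.1 ∧
    a.2.2.1 ≥ 2 * a.2.2.2 ∧
    a.2.2.2 ≤ l2 ∧
    a.2.2.1 ≤ l1 + 2 * a.2.2.2 ∧
    a.2.1 ≤ l2 + a.2.2.1 - 2 * a.2.2.2 ∧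
    a.1 ≤ l1 + 2 * a.2.1 - 2 * a.2.2.1 + 2 * a.2.2.2 ∧
    a.1 + a.2.2.1 = b1 ∧
    a.2.1 + a.2.2.2 = b2}

private lemma sum_Ioc_split (a b c : ℤ) (h1 : a ≤ b) (h2 : b ≤ c) (f : ℤ → ℚ) :
    ∑ t ∈ Finset.Ioc a c, f t = (∑ t ∈ Finset.Ioc a b, f t) + ∑ t ∈ Finset.Ioc b c, f t := by
  rw [← Finset.sum_union (by
    rw [Finset.disjoint_left]
    intro x hx hx'
    simp only [Finset.mem_Ioc] at hx hx'
    omega)]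
  congr 1
  ext x
  simp only [Finset.mem_union, Finset.mem_Ioc]
  omega

private lemma sum_Ioc_linear (c d : ℚ) (a b : ℤ) (h : a ≤ b) :
    ∑ t ∈ Finset.Ioc a b, (c + d * (t : ℚ)) =
      ((b : ℚ) - a) * c + d * ((b : ℚ) * (b + 1) - (a : ℚ) * (a + 1)) / 2 := by
  refine Int.le_induction (motive := fun b _ => ∑ t ∈ Finset.Ioc a b, (c + d * (t : ℚ)) =
      ((b : ℚ) - a) * c + d * ((b : ℚ) * (b + 1) - (a : ℚ) * (a + 1)) / 2) ?_ ?_ b h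
  · simp [Finset.Ioc_self]
  · intro n hn ih
    rw [show Finset.Ioc a (n + 1) = insert (n + 1) (Finset.Ioc a n) by
      ext x; simp only [Finset.mem_insert, Finset.mem_Ioc]; omega]
    rw [Finset.sum_insert (by simp only [Finset.mem_Ioc]; omega), ih]
    push_cast
    ring

theorem weightMult_on_cone_f12 (l1 l2 b1 b2 : ℤ)
    (h0 : 0 ≤ l1)
    (h1 : 0 ≤ l2)
    (h2 : 0 ≤ -l2 + b2)
    (h3 : 0 ≤ b1 - 2*b2)
    (h4 : 0 ≤ l1 - b1) :
    (weightMult l1 l2 b1 b2 : ℚ) = 1 + (1/2)*l2 + b2 + l2*b2 - (1/2)*l2^2 := by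
  -- the finset parametrizing the solution set
  set T : Finset (ℤ × ℤ × ℤ × ℤ) :=
    (Finset.Ioc (-1) l2).biUnion (fun t =>
      (Finset.Icc (max (2*t) (b2 + t - l2)) (2*b2 - 2*t)).image
        (fun s => (b1 - s, b2 - t, s, t))) with hT
  have hset : {a : ℤ × ℤ × ℤ × ℤ |
    0 ≤ a.1 ∧ 0 ≤ a.2.1 ∧ 0 ≤ a.2.2.1 ∧ 0 ≤ a.2.2.2 ∧
    2 * a.2.1 ≥ a.2.2.1 ∧
    a.2.2.1 ≥ 2 * a.2.2.2 ∧
    a.2.2.2 ≤ l2 ∧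
    a.2.2.1 ≤ l1 + 2 * a.2.2.2 ∧
    a.2.1 ≤ l2 + a.2.2.1 - 2 * a.2.2.2 ∧
    a.1 ≤ l1 + 2 * a.2.1 - 2 * a.2.2.1 + 2 * a.2.2.2 ∧
    a.1 + a.2.2.1 = b1 ∧
    a.2.1 + a.2.2.2 = b2} = ↑T := by
    ext ⟨a22, a11, a12, a13⟩
    simp only [hT, Set.mem_setOf_eq, Finset.coe_biUnion, Finset.mem_coe, Finset.mem_Ioc,
      Set.mem_iUnion, Finset.mem_image, Finset.mem_Icc, Prod.mk.injEq]
    constructor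
    · rintro ⟨c1, c2, c3, c4, c5, c6, c7, c8, c9, c10, c11, c12⟩
      exact ⟨a13, ⟨by omega, by omega⟩, a12, ⟨by omega, by omega⟩, by omega, by omega, rfl, rfl⟩
    · rintro ⟨t, ⟨ht1, ht2⟩, s, ⟨hs1, hs2⟩, e1, e2, e3, e4⟩
      subst e3; subst e4
      refine ⟨by omega, by omega, by omega, by omega, by omega, by omega, by omega, by omega,
        by omega, by omega, by omega, by omega⟩
  have hcard : weightMult l1 l2 b1 b2 = T.card := by
    rw [weightMult, hset, Set.ncard_coe_finset]
  have hinj : ∀ t : ℤ, Function.Injective (fun s : ℤ => (b1 - s, b2 - t, s, t)) := by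
    intro t s s' h
    simpa using congrArg (fun p : ℤ × ℤ × ℤ × ℤ => p.2.2.1) h
  have hdisj : ∀ x ∈ Finset.Ioc (-1 : ℤ) l2, ∀ y ∈ Finset.Ioc (-1 : ℤ) l2, x ≠ y →
      Disjoint ((Finset.Icc (max (2*x) (b2 + x - l2)) (2*b2 - 2*x)).image
        (fun s => (b1 - s, b2 - x, s, x)))
        ((Finset.Icc (max (2*y) (b2 + y - l2)) (2*b2 - 2*y)).image
        (fun s => (b1 - s, b2 - y, s, y))) := by
    intro x _ y _ hxy
    rw [Finset.disjoint_left]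
    rintro p hp hp'
    simp only [Finset.mem_image] at hp hp'
    obtain ⟨s, _, rfl⟩ := hp
    obtain ⟨s', _, h'⟩ := hp'
    exact hxy (congrArg (fun p : ℤ × ℤ × ℤ × ℤ => p.2.2.2) h').symm
  have hTcard : T.card = ∑ t ∈ Finset.Ioc (-1 : ℤ) l2,
      ((2*b2 - 2*t) + 1 - max (2*t) (b2 + t - l2)).toNat := by
    rw [hT, Finset.card_biUnion hdisj]
    refine Finset.sum_congr rfl fun t _ => ?_
    rw [Finset.card_image_of_injective _ (hinj t), Int.card_Icc]
  have key : (weightMult l1 l2 b1 b2 : ℚ) = ∑ t ∈ Finset.Ioc (-1 : ℤ) l2,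
      (((2*b2 - 2*t) + 1 - max (2*t) (b2 + t - l2)).toNat : ℚ) := by
    rw [hcard, hTcard]
    push_cast
    rfl
  rw [key]
  rcases le_or_gt (2 * l2) b2 with hc | hc
  · -- case 2*l2 ≤ b2 : single regime
    have e0 : ∑ t ∈ Finset.Ioc (-1 : ℤ) l2,
        (((2*b2 - 2*t) + 1 - max (2*t) (b2 + t - l2)).toNat : ℚ)
        = ∑ t ∈ Finset.Ioc (-1 : ℤ) l2, (((b2 : ℚ) + l2 + 1) + (-3 : ℚ) * (t : ℚ)) := by
      refine Finset.sum_congr rfl fun t ht => ?_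
      rw [Finset.mem_Ioc] at ht
      have h' : (((2*b2 - 2*t) + 1 - max (2*t) (b2 + t - l2)).toNat : ℤ)
          = (b2 + l2 + 1) + (-3) * t := by omega
      rw [show (((2*b2 - 2*t) + 1 - max (2*t) (b2 + t - l2)).toNat : ℚ)
          = ((((2*b2 - 2*t) + 1 - max (2*t) (b2 + t - l2)).toNat : ℤ) : ℚ) by push_cast; ring,
        h']
      push_cast
      ring
    rw [e0, sum_Ioc_linear _ _ _ _ (by omega : (-1:ℤ) ≤ l2)]
    push_cast
    ring
  · -- case b2 < 2*l2 : three regimes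
    obtain ⟨q, r, hb2, hr⟩ : ∃ q r : ℤ, b2 = 2*q + r ∧ (r = 0 ∨ r = 1) :=
      ⟨b2 / 2, b2 % 2, by omega, by omega⟩
    rw [sum_Ioc_split (-1) (b2 - l2) l2 (by omega) (by omega),
      sum_Ioc_split (b2 - l2) q l2 (by omega) (by omega)]
    have e1 : ∑ t ∈ Finset.Ioc (-1 : ℤ) (b2 - l2),
        (((2*b2 - 2*t) + 1 - max (2*t) (b2 + t - l2)).toNat : ℚ)
        = ∑ t ∈ Finset.Ioc (-1 : ℤ) (b2 - l2), (((b2 : ℚ) + l2 + 1) + (-3 : ℚ) * (t : ℚ)) := by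
      refine Finset.sum_congr rfl fun t ht => ?_
      rw [Finset.mem_Ioc] at ht
      have h' : (((2*b2 - 2*t) + 1 - max (2*t) (b2 + t - l2)).toNat : ℤ)
          = (b2 + l2 + 1) + (-3) * t := by omega
      rw [show (((2*b2 - 2*t) + 1 - max (2*t) (b2 + t - l2)).toNat : ℚ)
          = ((((2*b2 - 2*t) + 1 - max (2*t) (b2 + t - l2)).toNat : ℤ) : ℚ) by push_cast; ring,
        h']
      push_cast
      ring
    have e2 : ∑ t ∈ Finset.Ioc (b2 - l2) q,
        (((2*b2 - 2*t) + 1 - max (2*t) (b2 + t - l2)).toNat : ℚ)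
        = ∑ t ∈ Finset.Ioc (b2 - l2) q, (((2*b2 : ℚ) + 1) + (-4 : ℚ) * (t : ℚ)) := by
      refine Finset.sum_congr rfl fun t ht => ?_
      rw [Finset.mem_Ioc] at ht
      have h' : (((2*b2 - 2*t) + 1 - max (2*t) (b2 + t - l2)).toNat : ℤ)
          = (2*b2 + 1) + (-4) * t := by omega
      rw [show (((2*b2 - 2*t) + 1 - max (2*t) (b2 + t - l2)).toNat : ℚ)
          = ((((2*b2 - 2*t) + 1 - max (2*t) (b2 + t - l2)).toNat : ℤ) : ℚ) by push_cast; ring,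
        h']
      push_cast
      ring
    have e3 : ∑ t ∈ Finset.Ioc q l2,
        (((2*b2 - 2*t) + 1 - max (2*t) (b2 + t - l2)).toNat : ℚ) = 0 := by
      refine Finset.sum_eq_zero fun t ht => ?_
      rw [Finset.mem_Ioc] at ht
      have h' : ((2*b2 - 2*t) + 1 - max (2*t) (b2 + t - l2)).toNat = 0 := by omega
      rw [h']
      norm_num
    rw [e1, e2, e3, sum_Ioc_linear _ _ _ _ (by omega : (-1:ℤ) ≤ b2 - l2),
      sum_Ioc_linear _ _ _ _ (by omega : b2 - l2 ≤ q)]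
    subst hb2
    rcases hr with rfl | rfl <;> (push_cast; ring)
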